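/- Let (ψ_i)_{i ∈ Fin 3} and (φ_j)_{j ∈ Fin 3} be two orthonormal bases of ℂ³ such that ⟨ψ_i, φ_j⟩ ≠ 0 for all i, j. Then for every i and j, the binary projective measurements {P_{ψ_i}, I − P_{ψ_i}} and {P_{φ_j}, I − P_{φ_j}} are not jointly measurable. Since every nontrivial coarse-graining of a 3-outcome rank-one projective measurement is of this form, the two measurements remain incompatible under all nontrivial coarse-grainings; i.e., in dimension 3 the condition ⟨ψ_i, φ_j⟩ ≠ 0 for all i, j is sufficient for full incompatibility with respect to coarse-graining. -/

import Mathlib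

open Matrix Finset
open scoped ComplexOrder

noncomputable section

/-- A `d`-outcome POVM on `ℂ^n`: positive semidefinite effects summing to the identity. -/
def IsPOVM {n d : ℕ} (M : Fin d → Matrix (Fin n) (Fin n) ℂ) : Prop :=
  (∀ z, (M z).PosSemidef) ∧ ∑ z, M z = 1

/-- Coarse-graining of a `d`-outcome POVM along `f : Fin d → Fin k`. -/
def coarseGrain {n d k : ℕ} (M : Fin d → Matrix (Fin n) (Fin n) ℂ) (f : Fin d → Fin k)
    (z' : Fin k) : Matrix (Fin n) (Fin n) ℂ :=
  ∑ z ∈ Finset.univ.filter (fun z => f z = z'), M z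

/-- Compatibility of a finite family of `d`-outcome POVMs: existence of a parent POVM
`G` together with classical post-processings `p`. -/
def Compatible {n m d : ℕ} (M : Fin m → Fin d → Matrix (Fin n) (Fin n) ℂ) : Prop :=
  ∃ (L : ℕ) (G : Fin L → Matrix (Fin n) (Fin n) ℂ) (p : Fin m → Fin d → Fin L → ℝ),
    (∀ l, (G l).PosSemidef) ∧ (∑ l, G l = 1) ∧
    (∀ x z l, 0 ≤ p x z l) ∧ (∀ x l, ∑ z, p x z l = 1) ∧
    (∀ x z, M x z = ∑ l, (p x z l : ℂ) • G l)

/-- Joint measurability of two POVMs via a joint parent POVM with marginals `A` and `B`. -/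
def JointlyMeasurable {n a b : ℕ} (A : Fin a → Matrix (Fin n) (Fin n) ℂ)
    (B : Fin b → Matrix (Fin n) (Fin n) ℂ) : Prop :=
  ∃ G : Fin a → Fin b → Matrix (Fin n) (Fin n) ℂ,
    (∀ i j, (G i j).PosSemidef) ∧ (∑ i, ∑ j, G i j = 1) ∧
    (∀ i, A i = ∑ j, G i j) ∧ (∀ j, B j = ∑ i, G i j)


lemma vmv_mulVec (v w x : Fin 3 → ℂ) :
    vecMulVec v w *ᵥ x = (w ⬝ᵥ x) • v := by
  ext k
  simp only [mulVec, dotProduct, vecMulVec_apply, Pi.smul_apply, smul_eq_mul, Finset.sum_mul]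
  exact Finset.sum_congr rfl fun l _ => by ring

lemma dot_star_comm (v w : Fin 3 → ℂ) : star w ⬝ᵥ v = star (star v ⬝ᵥ w) := by
  simp [dotProduct, star_sum, mul_comm]

lemma trace_vmv (v : Fin 3 → ℂ) : (vecMulVec v (star v)).trace = star v ⬝ᵥ v := by
  simp [Matrix.trace, Matrix.diag, vecMulVec_apply, dotProduct, mul_comm]

lemma squeeze {v : Fin 3 → ℂ} (hv : star v ⬝ᵥ v = 1)
    {A : Matrix (Fin 3) (Fin 3) ℂ} (hA : A.PosSemidef)
    (hPA : (vecMulVec v (star v) - A).PosSemidef) :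
    ∃ c : ℂ, 0 ≤ c ∧ A = c • vecMulVec v (star v) := by
  have key : ∀ x, star v ⬝ᵥ x = 0 → A *ᵥ x = 0 := by
    intro x hx
    rw [← hA.dotProduct_mulVec_zero_iff]
    have h1 : (0:ℂ) ≤ star x ⬝ᵥ A *ᵥ x := hA.dotProduct_mulVec_nonneg x
    have h2 := hPA.dotProduct_mulVec_nonneg x
    have h3 : star x ⬝ᵥ (vecMulVec v (star v)) *ᵥ x = 0 := by
      rw [vmv_mulVec, hx]; simp
    rw [sub_mulVec, dotProduct_sub, h3, zero_sub] at h2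
    exact le_antisymm (neg_nonneg.mp h2) h1
  have key2 : ∀ x, A *ᵥ x = (star v ⬝ᵥ x) • (A *ᵥ v) := by
    intro x
    have hx : star v ⬝ᵥ (x - (star v ⬝ᵥ x) • v) = 0 := by
      rw [dotProduct_sub, dotProduct_smul, hv]; simp
    have h := key _ hx
    rw [mulVec_sub, mulVec_smul, sub_eq_zero] at h
    exact h
  set u := A *ᵥ v with hu
  set c := star v ⬝ᵥ u with hc
  have hherm : ∀ y, star v ⬝ᵥ y = 0 → star y ⬝ᵥ u = 0 := by
    intro y hy
    have h0 : A *ᵥ y = 0 := key y hy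
    have : star y ⬝ᵥ u = star (A *ᵥ y) ⬝ᵥ v := by
      rw [hu, dotProduct_mulVec, star_mulVec, hA.1.eq]
    rw [this, h0]; simp
  have huv : u = c • v := by
    have hy : star v ⬝ᵥ (u - c • v) = 0 := by
      rw [dotProduct_sub, dotProduct_smul, hv, ← hc]; simp
    have h1 : star (u - c • v) ⬝ᵥ u = 0 := hherm _ hy
    have h2 : star (u - c • v) ⬝ᵥ v = 0 := by
      rw [dot_star_comm, hy, star_zero]
    have h3 : star (u - c • v) ⬝ᵥ (u - c • v) = 0 := by
      rw [dotProduct_sub, h1, dotProduct_smul, h2, smul_zero, sub_zero]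
    have := dotProduct_star_self_eq_zero.mp h3
    rwa [sub_eq_zero] at this
  refine ⟨c, hc ▸ hu ▸ hA.dotProduct_mulVec_nonneg v, ?_⟩
  ext k l
  have h := congrFun (key2 (Pi.single l 1)) k
  rw [mulVec_single] at h
  simp only [MulOpposite.op_one, one_smul, Matrix.col_apply] at h
  rw [huv] at h
  have hd : star v ⬝ᵥ Pi.single l 1 = star (v l) := by
    rw [dotProduct_single, mul_one]; rfl
  rw [hd] at h
  simp only [Pi.smul_apply, smul_eq_mul] at h
  rw [h]
  simp only [Matrix.smul_apply, vecMulVec_apply, smul_eq_mul]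
  simp only [Pi.star_apply]
  ring


lemma proj_ne {v w x : Fin 3 → ℂ} (hw : star w ⬝ᵥ w = 1)
    (hxv : star x ⬝ᵥ v = 0) (hxw : star x ⬝ᵥ w ≠ 0) :
    vecMulVec v (star v) ≠ vecMulVec w (star w) := by
  intro h
  apply hxw
  have h1 : star x ⬝ᵥ (vecMulVec w (star w) *ᵥ w) = star x ⬝ᵥ w := by
    rw [vmv_mulVec, hw, one_smul]
  rw [← h, vmv_mulVec, dotProduct_smul, hxv, smul_zero] at h1
  exact h1.symm

lemma complete (ψ : Fin 3 → Fin 3 → ℂ)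
    (hψ : ∀ i i', star (ψ i) ⬝ᵥ ψ i' = if i = i' then 1 else 0) :
    ∑ i, vecMulVec (ψ i) (star (ψ i)) = 1 := by
  set U : Matrix (Fin 3) (Fin 3) ℂ := Matrix.of ψ with hU
  have hUU : U * Uᴴ = 1 := by
    ext i i'
    have h := hψ i' i
    have hl : (U * Uᴴ) i i' = star (ψ i') ⬝ᵥ ψ i := by
      simp only [Matrix.mul_apply, conjTranspose_apply, hU, Matrix.of_apply, dotProduct,
        Pi.star_apply]
      exact Finset.sum_congr rfl fun x _ => mul_comm _ _
    rw [hl, h]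
    rcases eq_or_ne i i' with rfl | hne
    · simp [Matrix.one_apply]
    · simp [Matrix.one_apply, hne, Ne.symm hne]
  have hU'U : Uᴴ * U = 1 := mul_eq_one_comm.mp hUU
  ext k l
  have h : (Uᴴ * U) k l = (1 : Matrix (Fin 3) (Fin 3) ℂ) k l := by rw [hU'U]
  have hl : (∑ i, vecMulVec (ψ i) (star (ψ i))) k l = star ((Uᴴ * U) k l) := by
    simp [Matrix.sum_apply, vecMulVec_apply, Matrix.mul_apply, hU, conjTranspose_apply,
      star_sum, mul_comm]
  rw [hl, h]
  rcases eq_or_ne k l with rfl | hne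
  · simp [Matrix.one_apply]
  · simp [Matrix.one_apply, hne]

lemma exists_single {k : ℕ} (f : Fin 3 → Fin k) (hnc : ¬ (f 0 = f 1 ∧ f 0 = f 2)) :
    ∃ i : Fin 3, ∀ i', f i' = f i → i' = i := by
  by_cases h01 : f 0 = f 1
  · have h02 : f 0 ≠ f 2 := fun h => hnc ⟨h01, h⟩
    exact ⟨2, fun i' hi' => by fin_cases i' <;> simp_all⟩
  · by_cases h02 : f 0 = f 2
    · exact ⟨1, fun i' hi' => by fin_cases i' <;> simp_all⟩
    · exact ⟨0, fun i' hi' => by fin_cases i' <;> simp_all⟩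

lemma psd_sum {n : ℕ} {ι : Type*} (s : Finset ι) (F : ι → Matrix (Fin n) (Fin n) ℂ)
    (h : ∀ z ∈ s, (F z).PosSemidef) : (∑ z ∈ s, F z).PosSemidef := by
  classical
  induction s using Finset.induction with
  | empty => simpa using Matrix.PosSemidef.zero
  | insert _ _ hx ih =>
    rw [Finset.sum_insert hx]
    exact (h _ (Finset.mem_insert_self _ _)).add
      (ih fun z hz => h z (Finset.mem_insert_of_mem hz))

lemma jm_binary {n a b : ℕ} {A : Fin a → Matrix (Fin n) (Fin n) ℂ}
    {B : Fin b → Matrix (Fin n) (Fin n) ℂ}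
    (h : JointlyMeasurable A B) (z' : Fin a) (w' : Fin b) :
    JointlyMeasurable ![A z', 1 - A z'] ![B w', 1 - B w'] := by
  classical
  obtain ⟨G, hPSD, hsum, hAm, hBm⟩ := h
  set S : Fin 2 → Finset (Fin a) := ![{z'}, univ.erase z'] with hS
  set T : Fin 2 → Finset (Fin b) := ![{w'}, univ.erase w'] with hT
  have hSsum : ∀ (F : Fin a → Matrix (Fin n) (Fin n) ℂ),
      ∑ i : Fin 2, ∑ z ∈ S i, F z = ∑ z, F z := by
    intro F
    rw [Fin.sum_univ_two]
    simp only [hS, Matrix.cons_val_zero, Matrix.cons_val_one, Matrix.head_cons,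
      Finset.sum_singleton]
    exact Finset.add_sum_erase _ F (mem_univ z')
  have hTsum : ∀ (F : Fin b → Matrix (Fin n) (Fin n) ℂ),
      ∑ j : Fin 2, ∑ w ∈ T j, F w = ∑ w, F w := by
    intro F
    rw [Fin.sum_univ_two]
    simp only [hT, Matrix.cons_val_zero, Matrix.cons_val_one, Matrix.head_cons,
      Finset.sum_singleton]
    exact Finset.add_sum_erase _ F (mem_univ w')
  refine ⟨fun i j => ∑ z ∈ S i, ∑ w ∈ T j, G z w, ?_, ?_, ?_, ?_⟩
  · intro i j
    exact psd_sum _ _ fun z _ => psd_sum _ _ fun w _ => hPSD z w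
  · calc ∑ i : Fin 2, ∑ j : Fin 2, ∑ z ∈ S i, ∑ w ∈ T j, G z w
        = ∑ i : Fin 2, ∑ z ∈ S i, ∑ j : Fin 2, ∑ w ∈ T j, G z w := by
          exact Finset.sum_congr rfl fun i _ => Finset.sum_comm
      _ = ∑ i : Fin 2, ∑ z ∈ S i, ∑ w, G z w := by
          exact Finset.sum_congr rfl fun i _ => Finset.sum_congr rfl fun z _ => hTsum _
      _ = ∑ z, ∑ w, G z w := hSsum _
      _ = 1 := hsum
  · intro i
    have hmarg : ∀ i, ∑ j : Fin 2, ∑ z ∈ S i, ∑ w ∈ T j, G z w = ∑ z ∈ S i, ∑ w, G z w := by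
      intro i
      rw [Finset.sum_comm]
      exact Finset.sum_congr rfl fun z _ => hTsum _
    have h1 : A z' + ∑ z ∈ univ.erase z', ∑ w, G z w = 1 := by
      rw [hAm z']
      rw [Finset.add_sum_erase _ (fun z => ∑ w, G z w) (mem_univ z')]
      exact hsum
    have hA0 : ∑ j : Fin 2, ∑ z ∈ S 0, ∑ w ∈ T j, G z w = A z' := by
      rw [hmarg 0]
      simp only [hS, Matrix.cons_val_zero, Finset.sum_singleton]
      exact (hAm z').symm
    have hA1 : ∑ j : Fin 2, ∑ z ∈ S 1, ∑ w ∈ T j, G z w = 1 - A z' := by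
      rw [hmarg 1]
      simp only [hS, Matrix.cons_val_one, Matrix.head_cons]
      exact eq_sub_of_add_eq' h1
    fin_cases i
    · exact hA0.symm
    · exact hA1.symm
  · intro j
    have hmarg : ∀ j, ∑ i : Fin 2, ∑ z ∈ S i, ∑ w ∈ T j, G z w = ∑ w ∈ T j, ∑ z, G z w := by
      intro j
      calc ∑ i : Fin 2, ∑ z ∈ S i, ∑ w ∈ T j, G z w
          = ∑ i : Fin 2, ∑ w ∈ T j, ∑ z ∈ S i, G z w := by
            exact Finset.sum_congr rfl fun i _ => Finset.sum_comm
        _ = ∑ w ∈ T j, ∑ i : Fin 2, ∑ z ∈ S i, G z w := Finset.sum_comm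
        _ = ∑ w ∈ T j, ∑ z, G z w := Finset.sum_congr rfl fun w _ => hSsum _
    have h1 : B w' + ∑ w ∈ univ.erase w', ∑ z, G z w = 1 := by
      rw [hBm w']
      rw [Finset.add_sum_erase _ (fun w => ∑ z, G z w) (mem_univ w')]
      rw [Finset.sum_comm]
      exact hsum
    have hB0 : ∑ i : Fin 2, ∑ z ∈ S i, ∑ w ∈ T 0, G z w = B w' := by
      rw [hmarg 0]
      simp only [hT, Matrix.cons_val_zero, Finset.sum_singleton]
      exact (hBm w').symm
    have hB1 : ∑ i : Fin 2, ∑ z ∈ S i, ∑ w ∈ T 1, G z w = 1 - B w' := by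
      rw [hmarg 1]
      simp only [hT, Matrix.cons_val_one, Matrix.head_cons]
      exact eq_sub_of_add_eq' h1
    fin_cases j
    · exact hB0.symm
    · exact hB1.symm

lemma binary_incompat {v w : Fin 3 → ℂ} (hv : star v ⬝ᵥ v = 1) (hw : star w ⬝ᵥ w = 1)
    (hvw : star v ⬝ᵥ w ≠ 0)
    (hne : vecMulVec v (star v) ≠ vecMulVec w (star w)) :
    ¬ JointlyMeasurable ![vecMulVec v (star v), 1 - vecMulVec v (star v)]
        ![vecMulVec w (star w), 1 - vecMulVec w (star w)] := by
  rintro ⟨G, hPSD, hsum, hAm, hBm⟩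
  set P := vecMulVec v (star v) with hP
  set Q := vecMulVec w (star w) with hQ
  have hA0 : P = G 0 0 + G 0 1 := by simpa [Fin.sum_univ_two] using hAm 0
  have hB0 : Q = G 0 0 + G 1 0 := by simpa [Fin.sum_univ_two] using hBm 0
  have h1 : (P - G 0 0).PosSemidef := by
    rw [hA0, add_sub_cancel_left]; exact hPSD 0 1
  have h2 : (Q - G 0 0).PosSemidef := by
    rw [hB0, add_sub_cancel_left]; exact hPSD 1 0
  obtain ⟨c, hc0, hcP⟩ := squeeze hv (hPSD 0 0) h1
  obtain ⟨d, hd0, hdQ⟩ := squeeze hw (hPSD 0 0) h2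
  have hcd : c = d := by
    have h := congrArg Matrix.trace (hcP.symm.trans hdQ)
    rwa [trace_smul, trace_smul, trace_vmv, trace_vmv, hv, hw, smul_eq_mul, smul_eq_mul,
      mul_one, mul_one] at h
  have hc : c = 0 := by
    by_contra hcne
    apply hne
    have h : c • P = c • Q := by rw [← hcP, hcd, hdQ]
    exact smul_right_injective _ hcne h
  have hG00 : G 0 0 = 0 := by rw [hcP, hc, zero_smul]
  have hG01 : G 0 1 = P := by rw [hA0, hG00, zero_add]
  have hG10 : G 1 0 = Q := by rw [hB0, hG00, zero_add]
  have hG11 : G 1 1 = 1 - P - Q := by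
    have h := hsum
    rw [Fin.sum_univ_two, Fin.sum_univ_two, Fin.sum_univ_two, hG00, hG01, hG10, zero_add] at h
    rw [← h]; abel
  have hpos := (hPSD 1 1).dotProduct_mulVec_nonneg w
  rw [hG11] at hpos
  set t := star v ⬝ᵥ w with ht
  have hQw : Q *ᵥ w = w := by rw [hQ, vmv_mulVec, hw, one_smul]
  have hval : star w ⬝ᵥ (1 - P - Q) *ᵥ w = -(t * star t) := by
    rw [sub_mulVec, sub_mulVec, one_mulVec, hQw, hP, vmv_mulVec,
      dotProduct_sub, dotProduct_sub, hw, dotProduct_smul, ← ht, dot_star_comm, ← ht]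
    simp only [smul_eq_mul]
    ring
  rw [hval] at hpos
  have hpos2 : (0:ℂ) ≤ t * star t := mul_star_self_nonneg t
  have h0 : t * star t = 0 := le_antisymm (neg_nonneg.mp hpos) hpos2
  rcases mul_eq_zero.mp h0 with h | h
  · exact hvw h
  · exact hvw (star_eq_zero.mp h)

/-- In dimension 3, nonvanishing of all overlaps between two orthonormal bases is sufficient for
full incompatibility w.r.t. coarse-graining: every pair of binary coarse-grainings
`{P_{ψ i}, 1 − P_{ψ i}}`, `{P_{φ j}, 1 − P_{φ j}}` is not jointly measurable, and the two
rank-one projective measurements remain incompatible under all nontrivial coarse-grainings. -/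
theorem dim_three_overlaps_nonzero_sufficient
    (ψ φ : Fin 3 → Fin 3 → ℂ)
    (hψ : ∀ i i', star (ψ i) ⬝ᵥ ψ i' = if i = i' then 1 else 0)
    (hφ : ∀ j j', star (φ j) ⬝ᵥ φ j' = if j = j' then 1 else 0)
    (hover : ∀ i j, star (ψ i) ⬝ᵥ φ j ≠ 0) :
    (∀ i j : Fin 3,
      ¬ JointlyMeasurable
          ![vecMulVec (ψ i) (star (ψ i)), 1 - vecMulVec (ψ i) (star (ψ i))]
          ![vecMulVec (φ j) (star (φ j)), 1 - vecMulVec (φ j) (star (φ j))]) ∧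
    (∀ a b : ℕ, 2 ≤ a → 2 ≤ b →
      ∀ (f : Fin 3 → Fin a) (g : Fin 3 → Fin b),
      (∀ z', coarseGrain (fun i => vecMulVec (ψ i) (star (ψ i))) f z' ≠ 1) →
      (∀ z', coarseGrain (fun j => vecMulVec (φ j) (star (φ j))) g z' ≠ 1) →
      ¬ JointlyMeasurable
          (coarseGrain (fun i => vecMulVec (ψ i) (star (ψ i))) f)
          (coarseGrain (fun j => vecMulVec (φ j) (star (φ j))) g)) := by
  have unit_ψ : ∀ i, star (ψ i) ⬝ᵥ ψ i = 1 := fun i => by simpa using hψ i i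
  have unit_φ : ∀ j, star (φ j) ⬝ᵥ φ j = 1 := fun j => by simpa using hφ j j
  have hne : ∀ i j, vecMulVec (ψ i) (star (ψ i)) ≠ vecMulVec (φ j) (star (φ j)) := by
    intro i j
    obtain ⟨i', hi'⟩ := exists_ne i
    have hxv : star (ψ i') ⬝ᵥ ψ i = 0 := by simpa [hi'] using hψ i' i
    exact proj_ne (unit_φ j) hxv (hover i' j)
  have hbin : ∀ i j : Fin 3, ¬ JointlyMeasurable
      ![vecMulVec (ψ i) (star (ψ i)), 1 - vecMulVec (ψ i) (star (ψ i))]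
      ![vecMulVec (φ j) (star (φ j)), 1 - vecMulVec (φ j) (star (φ j))] :=
    fun i j => binary_incompat (unit_ψ i) (unit_φ j) (hover i j) (hne i j)
  refine ⟨hbin, ?_⟩
  intro a b _ _ f g hf hg hJM
  have hncf : ¬ (f 0 = f 1 ∧ f 0 = f 2) := by
    rintro ⟨h1, h2⟩
    apply hf (f 0)
    rw [coarseGrain]
    have hfil : univ.filter (fun z => f z = f 0) = univ := by
      ext z
      simp only [Finset.mem_filter, Finset.mem_univ, true_and, iff_true]
      fin_cases z
      · rfl
      · exact h1.symm
      · exact h2.symm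
    rw [hfil]
    exact complete ψ hψ
  have hncg : ¬ (g 0 = g 1 ∧ g 0 = g 2) := by
    rintro ⟨h1, h2⟩
    apply hg (g 0)
    rw [coarseGrain]
    have hfil : univ.filter (fun z => g z = g 0) = univ := by
      ext z
      simp only [Finset.mem_filter, Finset.mem_univ, true_and, iff_true]
      fin_cases z
      · rfl
      · exact h1.symm
      · exact h2.symm
    rw [hfil]
    exact complete φ hφ
  obtain ⟨i, hi⟩ := exists_single f hncf
  obtain ⟨j, hj⟩ := exists_single g hncg
  have hfil : univ.filter (fun z => f z = f i) = {i} := by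
    ext z
    simp only [Finset.mem_filter, Finset.mem_univ, true_and, Finset.mem_singleton]
    exact ⟨hi z, fun h => h ▸ rfl⟩
  have hgil : univ.filter (fun z => g z = g j) = {j} := by
    ext z
    simp only [Finset.mem_filter, Finset.mem_univ, true_and, Finset.mem_singleton]
    exact ⟨hj z, fun h => h ▸ rfl⟩
  have hAz : coarseGrain (fun i => vecMulVec (ψ i) (star (ψ i))) f (f i)
      = vecMulVec (ψ i) (star (ψ i)) := by
    rw [coarseGrain, hfil, Finset.sum_singleton]
  have hBz : coarseGrain (fun j => vecMulVec (φ j) (star (φ j))) g (g j)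
      = vecMulVec (φ j) (star (φ j)) := by
    rw [coarseGrain, hgil, Finset.sum_singleton]
  have h2 := jm_binary hJM (f i) (g j)
  rw [hAz, hBz] at h2
  exact hbin i j h2
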